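/- Let n ≥ 3, ξ ∈ ℝ with ξ ≠ 0, η ∈ ℝ^{n-1}, and let v₁₁ be a symmetric bilinear form on ℝ^{n-1}. Suppose that for every unit vector ω with ξ λ̂ + η·ω = 0 (where λ̂ = −(η·ω)/ξ), the vector u(ω) = ((η·ω)/ξ)(η/ξ) + ω satisfies v₁₁(u(ω), u(ω)) = 0. Then v₁₁ = 0. -/
import Mathlib


open scoped RealInnerProductSpace

/-- the ξ ≠ 0 case at fiber infinity for 2-tensors: vanishing of
the symmetric bilinear form `v₁₁` on all vectors
`u(ω) = ((η·ω)/ξ)(η/ξ) + ω`, `ω` a unit vector (so that `(λ̂, ω)` with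
`λ̂ = −(η·ω)/ξ` lies in the critical set `ξλ̂ + η·ω = 0`), forces `v₁₁ = 0`. -/
theorem stmt14 (n : ℕ) (hn : 3 ≤ n) (ξ : ℝ) (hξ : ξ ≠ 0)
    (η : EuclideanSpace ℝ (Fin (n-1)))
    (v₁₁ : EuclideanSpace ℝ (Fin (n-1)) →ₗ[ℝ] EuclideanSpace ℝ (Fin (n-1)) →ₗ[ℝ] ℝ)
    (hsymm : ∀ x y, v₁₁ x y = v₁₁ y x)
    (h : ∀ ω : EuclideanSpace ℝ (Fin (n-1)), ‖ω‖ = 1 →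
      ξ * (-(⟪η, ω⟫ / ξ)) + ⟪η, ω⟫ = 0 →
      v₁₁ ((⟪η, ω⟫ / ξ^2) • η + ω) ((⟪η, ω⟫ / ξ^2) • η + ω) = 0) :
    v₁₁ = 0 := by
  set u : EuclideanSpace ℝ (Fin (n-1)) → EuclideanSpace ℝ (Fin (n-1)) :=
    fun x => (⟪η, x⟫ / ξ^2) • η + x with hu
  -- Step 1: Q(u ω) = 0 for all ω
  have key : ∀ ω, v₁₁ (u ω) (u ω) = 0 := by
    intro ω
    rcases eq_or_ne ω 0 with rfl | hω
    · simp [hu]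
    · have hnn : ‖ω‖ ≠ 0 := norm_ne_zero_iff.mpr hω
      have hcrit : ∀ a : ℝ, ξ * (-(a / ξ)) + a = 0 := fun a => by field_simp; ring
      have h1 := h ((‖ω‖⁻¹ : ℝ) • ω) (by simp [norm_smul, hnn]) (hcrit _)
      have hin : ⟪η, (‖ω‖⁻¹ : ℝ) • ω⟫ = ‖ω‖⁻¹ * ⟪η, ω⟫ := real_inner_smul_right η ω _
      rw [hin] at h1
      have heq : ((‖ω‖⁻¹ * ⟪η, ω⟫) / ξ^2) • η + (‖ω‖⁻¹:ℝ) • ω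
          = (‖ω‖⁻¹:ℝ) • u ω := by
        rw [hu]
        simp only [smul_add, smul_smul]
        ring_nf
      rw [heq] at h1
      simp only [map_smul, LinearMap.smul_apply, smul_eq_mul] at h1
      rcases mul_eq_zero.mp h1 with h2 | h2
      · exact absurd h2 (inv_ne_zero hnn)
      · rcases mul_eq_zero.mp h2 with h3 | h3
        · exact absurd h3 (inv_ne_zero hnn)
        · exact h3
  -- Step 2: polarization: v₁₁ (u x) (u y) = 0
  have uadd : ∀ x y, u (x + y) = u x + u y := by
    intro x y
    simp only [hu, inner_add_right]
    module
  have bil : ∀ x y, v₁₁ (u x) (u y) = 0 := by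
    intro x y
    have h0 := key (x + y)
    rw [uadd] at h0
    simp only [map_add, LinearMap.add_apply, key x, key y] at h0
    have hs := hsymm (u y) (u x)
    linarith [h0, hs]
  -- Step 3: surjectivity of u
  have hden : (ξ^2 + ‖η‖^2 : ℝ) ≠ 0 := by positivity
  have usurj : ∀ a, ∃ x, u x = a := by
    intro a
    refine ⟨a - (⟪η, a⟫ / (ξ^2 + ‖η‖^2)) • η, ?_⟩
    have hinη : ⟪η, η⟫ = ‖η‖^2 := real_inner_self_eq_norm_sq η
    simp only [hu, inner_sub_right, real_inner_smul_right, hinη]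
    have hc : (⟪η, a⟫ - ⟪η, a⟫ / (ξ^2 + ‖η‖^2) * ‖η‖^2) / ξ^2
        = ⟪η, a⟫ / (ξ^2 + ‖η‖^2) := by
      field_simp
      ring
    rw [hc]
    abel
  ext x y
  obtain ⟨a, ha⟩ := usurj x
  obtain ⟨b, hb⟩ := usurj y
  have := bil a b
  rw [ha, hb] at this
  simpa using this
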